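/- arXiv:2508.11879 — 2 statements merged into one kernel-verified Lean document; each statement's English description precedes it below -/
import Mathlib

section
/- If π is dominant with diagram D(π) equal to the Young diagram of partition λ, then π has a unique reduced pipe dream, whose set of crossing tiles is exactly D(π), and consequently the Schubert polynomial of π is the single monomial x^λ = ∏_i x_i^{λ_i}. -/
open Equiv MvPolynomial

/-- A permutation of ℕ has finite support. -/
def FinSupp (w : Equiv.Perm ℕ) : Prop := {i | w i ≠ i}.Finite

/-- Inversion set Inv(w) = {(i,j) : i < j, w i > w j}. -/
def invSet (w : Equiv.Perm ℕ) : Set (ℕ × ℕ) := {p | p.1 < p.2 ∧ w p.2 < w p.1}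

/-- Co-inversion set coInv(w) = {(i,j) : i < j, w i < w j}. -/
def coinvSet (w : Equiv.Perm ℕ) : Set (ℕ × ℕ) := {p | p.1 < p.2 ∧ w p.1 < w p.2}

/-- Coxeter length ℓ(w) = |Inv(w)|. -/
noncomputable def len (w : Equiv.Perm ℕ) : ℕ := (invSet w).ncard

/-- Cover relation of left weak order: u = s_k * w with ℓ(u) = ℓ(w) + 1. -/
def WeakCover (w u : Equiv.Perm ℕ) : Prop :=
  ∃ k, u = Equiv.swap k (k + 1) * w ∧ len u = len w + 1

/-- Left weak order: reflexive-transitive closure of weak covers. -/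
def leL (w u : Equiv.Perm ℕ) : Prop := Relation.ReflTransGen WeakCover w u

/-- π avoids the pattern 132 (π is dominant). -/
def Avoids132 (π : Equiv.Perm ℕ) : Prop :=
  ¬ ∃ a b c : ℕ, a < b ∧ b < c ∧ π a < π c ∧ π c < π b

/-- Rothe diagram D(π) (0-indexed conventions). -/
def Rothe (π : Equiv.Perm ℕ) : Set (ℕ × ℕ) := {p | p.1 < π⁻¹ p.2 ∧ p.2 < π p.1}

/-- Young diagram of a partition (0-indexed): row i has l i cells. -/
def yd (l : ℕ → ℕ) : Set (ℕ × ℕ) := {p | p.2 < l p.1}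

/-- Conjugate partition (0-indexed): column j has |{i : l i > j}| cells. -/
noncomputable def conjPart (l : ℕ → ℕ) (j : ℕ) : ℕ := {i | j < l i}.ncard

/-- A pipe dream: a finite set of crossing tiles together with the (uniquely
determined) labels of the pipes on the four edges of each tile.  At a cross
tile the pipes pass straight through; at a bump tile the pipe from the north
exits west and the pipe from the east exits south.  Pipe j enters the quadrant
at the north edge of column j. -/
structure PipeDream where
  cross : Finset (ℕ × ℕ)
  north : ℕ × ℕ → ℕ
  east : ℕ × ℕ → ℕ
  south : ℕ × ℕ → ℕ
  west : ℕ × ℕ → ℕ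
  north_top : ∀ j, north (0, j) = j
  north_succ : ∀ i j, north (i + 1, j) = south (i, j)
  east_eq : ∀ i j, east (i, j) = west (i, j + 1)
  south_cross : ∀ p ∈ cross, south p = north p
  west_cross : ∀ p ∈ cross, west p = east p
  south_bump : ∀ p, p ∉ cross → south p = east p
  west_bump : ∀ p, p ∉ cross → west p = north p

namespace PipeDream

/-- Pipes a and b cross at position p. -/
def CrossAt (P : PipeDream) (a b : ℕ) (p : ℕ × ℕ) : Prop :=
  p ∈ P.cross ∧ ({P.north p, P.east p} : Set ℕ) = {a, b}

/-- A pipe dream is reduced if no two pipes cross more than once. -/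
def Reduced (P : PipeDream) : Prop :=
  ∀ a b p q, P.CrossAt a b p → P.CrossAt a b q → p = q

/-- P is a pipe dream for the permutation w: pipe a exits on the west edge at
row w⁻¹(a), i.e. the one-line notation read along the west edge is w. -/
def IsFor (P : PipeDream) (w : Equiv.Perm ℕ) : Prop := ∀ i, P.west (i, 0) = w i

/-- Pipe k passes through the tile p. -/
def OnPipe (P : PipeDream) (k : ℕ) (p : ℕ × ℕ) : Prop := P.north p = k ∨ P.east p = k

/-- p lies weakly northwest of pipe k. -/
def NWOfPipe (P : PipeDream) (k : ℕ) (p : ℕ × ℕ) : Prop :=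
  ∃ q, P.OnPipe k q ∧ p.1 ≤ q.1 ∧ p.2 ≤ q.2

end PipeDream

/-- The set of reduced pipe dreams for w. -/
def PD (w : Equiv.Perm ℕ) : Set PipeDream := {P | P.Reduced ∧ P.IsFor w}

/-- The set of π-dominated positions of a pipe dream P ∈ PD(w), where π is the
dominant permutation with Rothe diagram the Young diagram of l:
row(p) < λ'(π(w⁻¹(s_p))) (0-indexed), s_p being the pipe exiting p south. -/
noncomputable def dominated (π : Equiv.Perm ℕ) (l : ℕ → ℕ) (w : Equiv.Perm ℕ)
    (P : PipeDream) : Set (ℕ × ℕ) :=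
  {p | p.1 < conjPart l (π (w⁻¹ (P.south p)))}

/-- The Schubert polynomial as the pipe dream generating function. -/
noncomputable def Schub (w : Equiv.Perm ℕ) : MvPolynomial ℕ ℤ :=
  ∑ᶠ P ∈ PD w, ∏ p ∈ P.cross, X p.1

/-- The polynomial ring ℤ[x;y]: x-variables are `Sum.inl i`, y-variables `Sum.inr i`. -/
abbrev PolyXY := MvPolynomial (ℕ ⊕ ℕ) ℤ

/-- The field of rational functions in the x- and y-variables. -/
noncomputable abbrev RatXY := FractionRing PolyXY

noncomputable def Xv (i : ℕ) : RatXY := algebraMap PolyXY RatXY (X (Sum.inl i))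
noncomputable def Yv (i : ℕ) : RatXY := algebraMap PolyXY RatXY (X (Sum.inr i))

/-- The π-padded Schubert polynomial 𝔖_w^π(x;y) = y^λ · 𝔖_w(x₁/y₁, x₂/y₂, …),
viewed in the field of rational functions. -/
noncomputable def padded (l : ℕ → ℕ) (w : Equiv.Perm ℕ) : RatXY :=
  (∏ᶠ i, Yv i ^ l i) * (aeval (fun i => Xv i / Yv i) (Schub w))

/-- Δ = Σ_i x_i ∂/∂y_i. -/
noncomputable def deltaOp (f : PolyXY) : PolyXY :=
  ∑ᶠ i : ℕ, X (Sum.inl i) * pderiv (Sum.inr i) f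

/-- ∇ = Σ_i y_i ∂/∂x_i. -/
noncomputable def nablaOp (f : PolyXY) : PolyXY :=
  ∑ᶠ i : ℕ, X (Sum.inr i) * pderiv (Sum.inl i) f

/-! ### Auxiliary development -/

theorem Equiv.apply_inv_self {α : Type*} (f : Equiv.Perm α) (x : α) : f (f⁻¹ x) = x :=
  f.apply_symm_apply x

namespace PipeDream

variable (P : PipeDream)

lemma exists_noncross (i j : ℕ) : ∃ k, j ≤ k ∧ (i, k) ∉ P.cross := by
  refine ⟨max j ((P.cross.sup Prod.snd) + 1), le_max_left _ _, fun hmem => ?_⟩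
  have h := Finset.le_sup (f := Prod.snd) hmem
  simp only [sup_le_iff] at h
  omega

/-- The first non-crossing column in row `i` at or after column `j`. -/
noncomputable def mfun (i j : ℕ) : ℕ := Nat.find (P.exists_noncross i j)

lemma le_mfun (i j : ℕ) : j ≤ P.mfun i j := (Nat.find_spec (P.exists_noncross i j)).1

lemma mfun_noncross (i j : ℕ) : (i, P.mfun i j) ∉ P.cross :=
  (Nat.find_spec (P.exists_noncross i j)).2

lemma cross_of_lt_mfun (i j k : ℕ) (h1 : j ≤ k) (h2 : k < P.mfun i j) :
    (i, k) ∈ P.cross := by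
  have h := Nat.find_min (P.exists_noncross i j) h2
  by_contra hc
  exact h ⟨h1, hc⟩

lemma mfun_le (i j k : ℕ) (h1 : j ≤ k) (h2 : (i, k) ∉ P.cross) : P.mfun i j ≤ k :=
  Nat.find_le ⟨h1, h2⟩

lemma mfun_eq_of_noncross (i j : ℕ) (h : (i, j) ∉ P.cross) : P.mfun i j = j :=
  le_antisymm (P.mfun_le i j j le_rfl h) (P.le_mfun i j)

lemma mfun_succ_of_cross (i j : ℕ) (h : (i, j) ∈ P.cross) :
    P.mfun i (j + 1) = P.mfun i j := by
  have hne : P.mfun i j ≠ j := by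
    intro he
    exact P.mfun_noncross i j (by rw [he]; exact h)
  have h1 : j + 1 ≤ P.mfun i j := by
    have := P.le_mfun i j; omega
  refine le_antisymm (P.mfun_le i (j+1) _ h1 (P.mfun_noncross i j)) ?_
  refine P.mfun_le i j _ ?_ (P.mfun_noncross i (j+1))
  have := P.le_mfun i (j+1); omega

lemma west_eq (i j : ℕ) : P.west (i, j) = P.north (i, P.mfun i j) := by
  generalize hd : P.mfun i j - j = d
  induction d generalizing j with
  | zero =>
    have hj : P.mfun i j = j := by have := P.le_mfun i j; omega
    have hnc : (i, j) ∉ P.cross := by rw [← hj]; exact P.mfun_noncross i j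
    rw [P.west_bump _ hnc, hj]
  | succ d ih =>
    have hc : (i, j) ∈ P.cross := by
      by_contra hnc
      have := P.mfun_eq_of_noncross i j hnc; omega
    have hms := P.mfun_succ_of_cross i j hc
    have hle := P.le_mfun i (j+1)
    rw [P.west_cross _ hc, P.east_eq, ih (j+1) (by omega), hms]

lemma east_eq_north (i j : ℕ) : P.east (i, j) = P.north (i, P.mfun i (j + 1)) := by
  rw [P.east_eq, P.west_eq]

lemma north_succ_eq (i j : ℕ) :
    P.north (i + 1, j) =
      if (i, j) ∈ P.cross then P.north (i, j) else P.north (i, P.mfun i (j + 1)) := by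
  rw [P.north_succ]
  split
  · exact P.south_cross _ ‹_›
  · rw [P.south_bump _ ‹_›, P.east_eq_north]

/-- The one-row transition map on positions: position `j` at cut `i+1` comes from
position `sig i j` at cut `i`. -/
noncomputable def sig (i j : ℕ) : ℕ := if (i, j) ∈ P.cross then j else P.mfun i (j + 1)

lemma north_succ_sig (i j : ℕ) : P.north (i + 1, j) = P.north (i, P.sig i j) := by
  rw [P.north_succ_eq, sig]
  split_ifs <;> rfl

lemma sig_ge (i j : ℕ) : j ≤ P.sig i j := by
  unfold sig
  split
  · exact le_rfl
  · have := P.le_mfun i (j+1); omega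

lemma sig_inj (i : ℕ) : Function.Injective (P.sig i) := by
  intro j1 j2 h
  unfold sig at h
  split_ifs at h with h1 h2 h2
  · exact h
  · exact absurd (by rw [h] at h1; exact h1) (P.mfun_noncross i (j2+1))
  · exact absurd (by rw [← h] at h2; exact h2) (P.mfun_noncross i (j1+1))
  · by_contra hne
    rcases Nat.lt_or_ge j1 j2 with hlt | hge
    · have ha : P.mfun i (j1+1) ≤ j2 := P.mfun_le i _ j2 (by omega) h2
      have := P.le_mfun i (j2+1); omega
    · have hlt : j2 < j1 := by omega
      have ha : P.mfun i (j2+1) ≤ j1 := P.mfun_le i _ j1 (by omega) h1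
      have := P.le_mfun i (j1+1); omega

lemma north_row_inj (i : ℕ) : Function.Injective (fun j => P.north (i, j)) := by
  induction i with
  | zero => intro a b h; simpa [P.north_top] using h
  | succ i ih =>
    intro a b h
    simp only [P.north_succ_sig] at h
    exact P.sig_inj i (ih h)

lemma sig_ne_mfun_zero (i j : ℕ) : P.sig i j ≠ P.mfun i 0 := by
  unfold sig
  split_ifs with hc
  · intro he
    exact P.mfun_noncross i 0 (by rw [← he]; exact hc)
  · intro he
    have h1 : P.mfun i 0 ≤ j := P.mfun_le i 0 j (Nat.zero_le j) hc
    have h2 := P.le_mfun i (j+1)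
    omega

lemma sig_surj (i k : ℕ) (hk : k ≠ P.mfun i 0) : ∃ j, P.sig i j = k := by
  by_cases hc : (i, k) ∈ P.cross
  · exact ⟨k, by simp [sig, hc]⟩
  · have hm0 : P.mfun i 0 < k :=
      lt_of_le_of_ne (P.mfun_le i 0 k (Nat.zero_le k) hc) (Ne.symm hk)
    set j := Nat.findGreatest (fun t => (i, t) ∉ P.cross) (k - 1) with hj
    have hjnc : (i, j) ∉ P.cross := by
      rw [hj]
      exact Nat.findGreatest_spec (P := fun t => (i, t) ∉ P.cross) (m := P.mfun i 0)
        (n := k - 1) (by omega) (P.mfun_noncross i 0)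
    have hjle : j ≤ k - 1 := Nat.findGreatest_le _
    refine ⟨j, ?_⟩
    simp only [sig, if_neg hjnc]
    have hle : P.mfun i (j + 1) ≤ k := P.mfun_le i (j+1) k (by omega) hc
    rcases eq_or_lt_of_le hle with he | hlt
    · exact he
    · exfalso
      have hnc' := P.mfun_noncross i (j+1)
      have hge := P.le_mfun i (j+1)
      have := Nat.le_findGreatest (P := fun t => (i, t) ∉ P.cross) (m := P.mfun i (j+1))
        (n := k - 1) (by omega) hnc'
      omega

/-- Pipes `a` and `b` cross somewhere in rows `≥ i`. -/
def CrossesFrom (i a b : ℕ) : Prop :=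
  ∃ p ∈ P.cross, i ≤ p.1 ∧ ({P.north p, P.east p} : Set ℕ) = {a, b}

lemma crossesFrom_succ_iff (i a b : ℕ) :
    P.CrossesFrom i a b ↔
      (∃ t, (i, t) ∈ P.cross ∧ ({P.north (i, t), P.east (i, t)} : Set ℕ) = {a, b}) ∨
        P.CrossesFrom (i + 1) a b := by
  constructor
  · rintro ⟨⟨r, t⟩, hp, hle, hpair⟩
    rcases eq_or_lt_of_le hle with he | hlt
    · left; exact ⟨t, by rw [he]; exact hp, by rw [he]; exact hpair⟩
    · right; exact ⟨(r, t), hp, hlt, hpair⟩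
  · rintro (⟨t, h1, h2⟩ | ⟨p, hp, hle, hpair⟩)
    · exact ⟨(i, t), h1, le_rfl, h2⟩
    · exact ⟨p, hp, by omega, hpair⟩

lemma ext' {P Q : PipeDream} (h1 : P.cross = Q.cross) (h2 : P.north = Q.north)
    (h3 : P.east = Q.east) (h4 : P.south = Q.south) (h5 : P.west = Q.west) : P = Q := by
  cases P; cases Q
  dsimp at h1 h2 h3 h4 h5
  subst h1; subst h2; subst h3; subst h4; subst h5
  rfl

end PipeDream

/-- The canonical pipe labels for the bottom (dominant) pipe dream of shape `l`:
`Ncf l i j` is the pipe crossing the horizontal cut below row `i-1` at column `j`. -/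
def Ncf (l : ℕ → ℕ) : ℕ → ℕ → ℕ
  | 0, j => j
  | i + 1, j => if j < l i then Ncf l i j else Ncf l i (j + 1)

lemma Ncf_zero (l : ℕ → ℕ) (j : ℕ) : Ncf l 0 j = j := rfl

lemma Ncf_succ (l : ℕ → ℕ) (i j : ℕ) :
    Ncf l (i + 1) j = if j < l i then Ncf l i j else Ncf l i (j + 1) := rfl

lemma Ncf_mono (l : ℕ → ℕ) : ∀ i, StrictMono (Ncf l i) := by
  intro i
  induction i with
  | zero => exact fun a b h => h
  | succ i ih =>
    intro j1 j2 h
    rw [Ncf_succ, Ncf_succ]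
    split_ifs with h1 h2 h2
    · exact ih h
    · exact ih (by omega)
    · exact absurd h (by omega)
    · exact ih (by omega)

lemma Ncf_low (l : ℕ → ℕ) (hl : Antitone l) : ∀ i j, j < l i → Ncf l i j = j := by
  intro i
  induction i with
  | zero => intro j _; rfl
  | succ i ih =>
    intro j h
    have hj : j < l i := lt_of_lt_of_le h (hl (Nat.le_succ i))
    rw [Ncf_succ, if_pos hj]
    exact ih j hj

lemma hli_fact (π : Equiv.Perm ℕ) (l : ℕ → ℕ) (hD : Rothe π = yd l) :
    ∀ i, l i ≤ π i := by
  have hDm : ∀ i j, (i < π⁻¹ j ∧ j < π i) ↔ j < l i := by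
    intro i j
    have := Set.ext_iff.mp hD (i, j)
    simpa [Rothe, yd] using this
  intro i
  by_contra h
  push_neg at h
  exact absurd ((hDm i (π i)).2 h).2 (lt_irrefl _)

theorem Ncf_main (π : Equiv.Perm ℕ) (l : ℕ → ℕ) (hl : Antitone l)
    (hD : Rothe π = yd l) :
    ∀ i, (∀ k, (∃ j, Ncf l i j = k) ↔ i ≤ π⁻¹ k) ∧ Ncf l i (l i) = π i := by
  have hDm : ∀ i j, (i < π⁻¹ j ∧ j < π i) ↔ j < l i := by
    intro i j
    have := Set.ext_iff.mp hD (i, j)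
    simpa [Rothe, yd] using this
  have hmono := Ncf_mono l
  have hlow := Ncf_low l hl
  have hli := hli_fact π l hD
  have hval : ∀ i, (∀ k, (∃ j, Ncf l i j = k) ↔ i ≤ π⁻¹ k) → Ncf l i (l i) = π i := by
    intro i hr
    obtain ⟨j, hj⟩ := (hr (π i)).2 (by simp)
    rcases lt_trichotomy j (l i) with h | h | h
    · exfalso
      rw [hlow i j h] at hj
      have := hli i
      omega
    · rw [← h]; exact hj
    · exfalso
      have hvlt : Ncf l i (l i) < π i := by rw [← hj]; exact hmono i h
      have hvge : l i ≤ Ncf l i (l i) := (hmono i).le_apply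
      have hvr : i ≤ π⁻¹ (Ncf l i (l i)) := (hr _).1 ⟨l i, rfl⟩
      have hne : π⁻¹ (Ncf l i (l i)) ≠ i := by
        intro he
        have : π (π⁻¹ (Ncf l i (l i))) = Ncf l i (l i) := π.apply_inv_self _
        rw [he] at this
        omega
      have := (hDm i (Ncf l i (l i))).1 ⟨lt_of_le_of_ne hvr (Ne.symm hne), hvlt⟩
      omega
  intro i
  induction i with
  | zero =>
    have hr : ∀ k, (∃ j, Ncf l 0 j = k) ↔ 0 ≤ π⁻¹ k := by
      intro k
      simp [Ncf_zero]
    exact ⟨hr, hval 0 hr⟩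
  | succ i ih =>
    have hr : ∀ k, (∃ j, Ncf l (i+1) j = k) ↔ i + 1 ≤ π⁻¹ k := by
      intro k
      have hpi : Ncf l i (l i) = π i := ih.2
      constructor
      · rintro ⟨j, hj⟩
        rw [Ncf_succ] at hj
        have hk' : ∃ j', j' ≠ l i ∧ Ncf l i j' = k := by
          split_ifs at hj with hc
          · exact ⟨j, by omega, hj⟩
          · exact ⟨j + 1, by omega, hj⟩
        obtain ⟨j', hne, hj'⟩ := hk'
        have h1 : i ≤ π⁻¹ k := (ih.1 k).1 ⟨j', hj'⟩
        have h2 : k ≠ π i := by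
          rw [← hpi, ← hj']
          exact fun he => hne ((hmono i).injective he)
        have h3 : π⁻¹ k ≠ i := by
          intro he
          apply h2
          rw [← he]
          exact (π.apply_inv_self k).symm
        omega
      · intro hk
        obtain ⟨j', hj'⟩ := (ih.1 k).2 (by omega)
        have h2 : k ≠ π i := by
          intro he
          rw [he] at hk
          simp at hk
        have hne : j' ≠ l i := by
          intro he
          rw [he, hpi] at hj'
          exact h2 hj'.symm
        rcases Nat.lt_or_ge j' (l i) with h | h
        · exact ⟨j', by rw [Ncf_succ, if_pos h]; exact hj'⟩
        · refine ⟨j' - 1, ?_⟩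
          have hgt : l i < j' := by omega
          rw [Ncf_succ, if_neg (by omega)]
          have : j' - 1 + 1 = j' := by omega
          rw [this]
          exact hj'
    exact ⟨hr, hval _ hr⟩

section PDLemmas

variable (π : Equiv.Perm ℕ) (P : PipeDream)

lemma hexit (hfor : P.IsFor π) (i : ℕ) : P.north (i, P.mfun i 0) = π i := by
  rw [← P.west_eq]
  exact hfor i

lemma gone (hfor : P.IsFor π) : ∀ i i' j, i < i' → P.north (i', j) ≠ π i := by
  intro i i'
  induction i' with
  | zero => intro j h; exact absurd h (Nat.not_lt_zero i)
  | succ i' ih =>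
    intro j h
    rw [P.north_succ_sig]
    rcases Nat.lt_or_ge i i' with hlt | hge
    · exact ih _ hlt
    · have hii : i = i' := by omega
      subst hii
      intro he
      have heq : P.sig i j = P.mfun i 0 :=
        P.north_row_inj i (he.trans (hexit π P hfor i).symm)
      exact P.sig_ne_mfun_zero i j heq

/-- If positions reverse across row `i` then the corresponding pipes cross in row `i`. -/
lemma swap_row_aux (i qa qb pa pb : ℕ)
    (hsa : P.sig i qa = pa) (hsb : P.sig i qb = pb)
    (h1 : qa < qb) (h2 : pb < pa) :
    (i, qb) ∈ P.cross ∧ qb = pb ∧ P.mfun i (qb + 1) = pa := by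
  have hqb_le : qb ≤ pb := by
    have := P.sig_ge i qb; omega
  have hqa_nc : (i, qa) ∉ P.cross := by
    intro hc
    have hs : P.sig i qa = qa := by simp [PipeDream.sig, hc]
    omega
  have hpa : P.mfun i (qa + 1) = pa := by
    rw [← hsa]; simp [PipeDream.sig, hqa_nc]
  have hqbc : (i, qb) ∈ P.cross :=
    P.cross_of_lt_mfun i (qa + 1) qb (by omega) (by omega)
  have hsigqb : P.sig i qb = qb := by simp [PipeDream.sig, hqbc]
  have hqb_pb : qb = pb := by rw [← hsb, hsigqb]
  refine ⟨hqbc, hqb_pb, ?_⟩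
  apply le_antisymm
  · exact P.mfun_le i (qb + 1) pa (by omega) (by rw [← hpa]; exact P.mfun_noncross i (qa + 1))
  · by_contra h
    push_neg at h
    have hge := P.le_mfun i (qb + 1)
    have := P.cross_of_lt_mfun i (qa + 1) (P.mfun i (qb + 1)) (by omega) (by omega)
    exact P.mfun_noncross i (qb + 1) this

/-- If pipes `a`, `b` cross in row `i` then their positions reverse across row `i`. -/
lemma swap_row_aux2 (i t qa qb pa pb a b : ℕ)
    (ht : (i, t) ∈ P.cross) (hn : P.north (i, t) = b)
    (he : P.north (i, P.mfun i (t + 1)) = a)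
    (hsa : P.sig i qa = pa) (hsb : P.sig i qb = pb)
    (hna : P.north (i, pa) = a) (hnb : P.north (i, pb) = b) :
    qa < qb ∧ pb < pa := by
  have hpb : pb = t := P.north_row_inj i (hnb.trans hn.symm)
  have hpa : pa = P.mfun i (t + 1) := P.north_row_inj i (hna.trans he.symm)
  have hqb : qb = t := by
    apply P.sig_inj i
    rw [hsb, hpb]
    simp [PipeDream.sig, ht]
  have hqa_nc : (i, qa) ∉ P.cross := by
    intro hc
    have hs : P.sig i qa = qa := by simp [PipeDream.sig, hc]
    rw [hs] at hsa
    rw [hsa, hpa] at hc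
    exact P.mfun_noncross i (t + 1) hc
  have hsa' : P.mfun i (qa + 1) = pa := by
    rw [← hsa]; simp [PipeDream.sig, hqa_nc]
  have hqat : qa ≠ t := fun h => hqa_nc (h ▸ ht)
  have hqalt : qa < t := by
    by_contra hcon
    push_neg at hcon
    have h1 : t < qa := by omega
    have h2 : P.mfun i (t + 1) ≤ qa := P.mfun_le i (t + 1) qa (by omega) hqa_nc
    have h3 := P.le_mfun i (qa + 1)
    omega
  have h4 := P.le_mfun i (t + 1)
  constructor
  · omega
  · omega

lemma swap_row (i qa qb pa pb a b : ℕ)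
    (hsa : P.sig i qa = pa) (hsb : P.sig i qb = pb)
    (hna : P.north (i, pa) = a) (hnb : P.north (i, pb) = b) (hab : a ≠ b) :
    (∃ t, (i, t) ∈ P.cross ∧ ({P.north (i, t), P.east (i, t)} : Set ℕ) = {a, b}) ↔
      ((qa < qb ∧ pb < pa) ∨ (qb < qa ∧ pa < pb)) := by
  constructor
  · rintro ⟨t, ht, hpair⟩
    rw [P.east_eq_north] at hpair
    rcases Set.pair_eq_pair_iff.1 hpair with ⟨hA, hB⟩ | ⟨hA, hB⟩
    · -- north (i,t) = a, east = b : roles of a,b swapped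
      have := swap_row_aux2 P i t qb qa pb pa b a ht hA hB hsb hsa hnb hna
      exact Or.inr ⟨this.1, this.2⟩
    · have := swap_row_aux2 P i t qa qb pa pb a b ht hA hB hsa hsb hna hnb
      exact Or.inl this
  · rintro (⟨h1, h2⟩ | ⟨h1, h2⟩)
    · obtain ⟨hc, hqp, hm⟩ := swap_row_aux P i qa qb pa pb hsa hsb h1 h2
      refine ⟨qb, hc, ?_⟩
      rw [P.east_eq_north, hm, hqp, hnb, hna]
      exact Set.pair_comm b a
    · obtain ⟨hc, hqp, hm⟩ := swap_row_aux P i qb qa pb pa hsb hsa h1 h2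
      refine ⟨qa, hc, ?_⟩
      rw [P.east_eq_north, hm, hqp, hna, hnb]

/-- Key lemma: in a reduced pipe dream for `π`, two pipes `a`, `b` present at cut `i`
with `b` exiting strictly before `a` cross in rows `≥ i` iff `a` is strictly left
of `b` at cut `i`. -/
lemma claimC (hred : P.Reduced) (hfor : P.IsFor π) :
    ∀ d i a b pa pb, π⁻¹ b - i = d → i ≤ π⁻¹ b → π⁻¹ b < π⁻¹ a →
      P.north (i, pa) = a → P.north (i, pb) = b → a ≠ b →
      (P.CrossesFrom i a b ↔ pa < pb) := by
  intro d
  induction d with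
  | zero =>
    intro i a b pa pb hd hle hba hna hnb hab
    have hπb : π i = b := by
      have hib : i = π⁻¹ b := by omega
      rw [hib]; exact π.apply_inv_self b
    have hm0 : P.north (i, P.mfun i 0) = b := by rw [hexit π P hfor i]; exact hπb
    have hpb : pb = P.mfun i 0 := P.north_row_inj i (hnb.trans hm0.symm)
    constructor
    · rintro ⟨⟨r, t⟩, hp, hle', hpair⟩
      have hbmem : b ∈ ({P.north (r, t), P.east (r, t)} : Set ℕ) := by
        rw [hpair]; exact Set.mem_insert_iff.2 (Or.inr rfl)
      rw [P.east_eq_north] at hbmem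
      rcases eq_or_lt_of_le hle' with her | hlt
      · -- r = i
        subst her
        rcases Set.mem_insert_iff.1 hbmem with h | h
        · exfalso
          have : t = P.mfun i 0 := P.north_row_inj i (h.symm.trans hm0.symm)
          rw [this] at hp
          exact P.mfun_noncross i 0 hp
        · rw [Set.mem_singleton_iff] at h
          have h1 : P.mfun i (t + 1) = P.mfun i 0 :=
            P.north_row_inj i (h.symm.trans hm0.symm)
          have ht_lt : t < P.mfun i 0 := by
            have := P.le_mfun i (t + 1); omega
          have ha : P.north (i, t) = a := by
            have hmem : P.north (i, t) ∈ ({a, b} : Set ℕ) := by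
              rw [← hpair, P.east_eq_north]
              exact Set.mem_insert_iff.2 (Or.inl rfl)
            rcases Set.mem_insert_iff.1 hmem with h' | h'
            · exact h'
            · exfalso
              rw [Set.mem_singleton_iff] at h'
              have : t = P.mfun i 0 := P.north_row_inj i (h'.trans hm0.symm)
              omega
          have : pa = t := P.north_row_inj i (hna.trans ha.symm)
          omega
      · exfalso
        rcases Set.mem_insert_iff.1 hbmem with h | h
        · exact gone π P hfor i r t hlt (h.symm.trans hπb.symm)
        · rw [Set.mem_singleton_iff] at h
          exact gone π P hfor i r _ hlt (h.symm.trans hπb.symm)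
    · intro hlt
      refine ⟨(i, pa), P.cross_of_lt_mfun i 0 pa (Nat.zero_le pa) (by omega), le_rfl, ?_⟩
      have hm : P.mfun i (pa + 1) = P.mfun i 0 := by
        refine le_antisymm (P.mfun_le i (pa + 1) _ (by omega) (P.mfun_noncross i 0)) ?_
        exact P.mfun_le i 0 _ (Nat.zero_le _) (P.mfun_noncross i (pa + 1))
      rw [P.east_eq_north, hm, hm0, hna]
  | succ d ih =>
    intro i a b pa pb hd hle hba hna hnb hab
    have hib : i < π⁻¹ b := by omega
    have hbne : b ≠ π i := by
      intro h
      rw [h] at hib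
      simp at hib
    have hane : a ≠ π i := by
      intro h
      rw [h] at hba
      simp at hba
      rw [Equiv.Perm.inv_def] at hib
      omega
    have hpa_ne : pa ≠ P.mfun i 0 := by
      intro h
      exact hane (by rw [← hna, h, hexit π P hfor i])
    have hpb_ne : pb ≠ P.mfun i 0 := by
      intro h
      exact hbne (by rw [← hnb, h, hexit π P hfor i])
    obtain ⟨qa, hqa⟩ := P.sig_surj i pa hpa_ne
    obtain ⟨qb, hqb⟩ := P.sig_surj i pb hpb_ne
    have hna' : P.north (i + 1, qa) = a := by rw [P.north_succ_sig, hqa]; exact hna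
    have hnb' : P.north (i + 1, qb) = b := by rw [P.north_succ_sig, hqb]; exact hnb
    have IH := ih (i + 1) a b qa qb (by omega) (by omega) hba hna' hnb' hab
    have SW := swap_row P i qa qb pa pb a b hqa hqb hna hnb hab
    have decomp := P.crossesFrom_succ_iff i a b
    have excl : ¬ ((∃ t, (i, t) ∈ P.cross ∧
        ({P.north (i, t), P.east (i, t)} : Set ℕ) = {a, b}) ∧ P.CrossesFrom (i + 1) a b) := by
      rintro ⟨⟨t, ht, hpt⟩, ⟨p, hp, hple, hpp⟩⟩
      have heq : (i, t) = p := hred a b (i, t) p ⟨ht, hpt⟩ ⟨hp, hpp⟩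
      rw [← heq] at hple
      simp at hple
    have hpanb : pa ≠ pb := fun h => hab (by rw [← hna, h, hnb])
    have hqanb : qa ≠ qb := fun h => hab (by rw [← hna', h, hnb'])
    constructor
    · intro hcf
      by_contra hge
      push_neg at hge
      have hpb_lt : pb < pa := by omega
      rcases decomp.1 hcf with hrow | hup
      · rcases SW.1 hrow with ⟨h1, h2⟩ | ⟨h1, h2⟩
        · exact excl ⟨hrow, IH.2 h1⟩
        · omega
      · have h1 : qa < qb := IH.1 hup
        exact excl ⟨SW.2 (Or.inl ⟨h1, hpb_lt⟩), hup⟩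
    · intro hlt
      apply decomp.2
      rcases lt_or_gt_of_ne hqanb with h | h
      · exact Or.inr (IH.2 h)
      · exact Or.inl (SW.2 (Or.inr ⟨h, hlt⟩))

lemma mfun_of_row (l : ℕ → ℕ) (i : ℕ)
    (hrow : ∀ k, (i, k) ∈ P.cross ↔ k < l i) (j : ℕ) :
    P.mfun i j = max j (l i) := by
  apply le_antisymm
  · refine P.mfun_le i j _ (le_max_left _ _) ?_
    rw [hrow]
    omega
  · have h1 := P.le_mfun i j
    have h2 := P.mfun_noncross i j
    rw [hrow] at h2
    omega

/-- The rigidity theorem: every reduced pipe dream for a dominant `π` has the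
canonical labels and crossing set. -/
lemma key (l : ℕ → ℕ) (hdom : Avoids132 π) (hl : Antitone l) (hD : Rothe π = yd l)
    (hred : P.Reduced) (hfor : P.IsFor π) :
    ∀ i, (∀ j, P.north (i, j) = Ncf l i j) ∧ (∀ j, ((i, j) ∈ P.cross ↔ j < l i)) := by
  have hmain := Ncf_main π l hl hD
  have hmono := Ncf_mono l
  have hlow := Ncf_low l hl
  have hli := hli_fact π l hD
  intro i
  induction i using Nat.strong_induction_on with
  | _ i IH =>
  have hN : ∀ j, P.north (i, j) = Ncf l i j := by
    cases i with
    | zero => intro j; rw [P.north_top]; rfl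
    | succ i' =>
      have hrow := (IH i' (Nat.lt_succ_self i')).2
      have hN' := (IH i' (Nat.lt_succ_self i')).1
      have hmf := mfun_of_row P l i' hrow
      intro j
      rw [P.north_succ_eq]
      by_cases hc : j < l i'
      · rw [if_pos ((hrow j).2 hc), hN' j, Ncf_succ, if_pos hc]
      · rw [if_neg (fun h => hc ((hrow j).1 h)), hmf, hN']
        have hmx : max (j + 1) (l i') = j + 1 := by omega
        rw [hmx, Ncf_succ, if_neg hc]
  refine ⟨hN, ?_⟩
  have hval := (hmain i).2
  have hm0 : l i ≤ P.mfun i 0 := by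
    by_contra h
    push_neg at h
    have h1 := hexit π P hfor i
    rw [hN, hlow i _ h] at h1
    have := hli i
    omega
  have hm0' : P.mfun i 0 = l i := by
    rcases eq_or_lt_of_le hm0 with h | h
    · exact h.symm
    · exfalso
      have h1 := hexit π P hfor i
      rw [hN] at h1
      have hlt := hmono i h
      rw [hval, h1] at hlt
      exact lt_irrefl _ hlt
  intro j
  constructor
  · intro hc
    by_contra hge
    push_neg at hge
    have hj_ne : j ≠ l i := by
      intro h
      rw [h, ← hm0'] at hc
      exact P.mfun_noncross i 0 hc
    have hjgt : l i < j := by omega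
    set pa := P.mfun i (j + 1) with hpadef
    set b := Ncf l i j with hbdef
    set a := Ncf l i pa with hadef
    have hna : P.north (i, pa) = a := hN pa
    have hnb : P.north (i, j) = b := hN j
    have hjpa : j < pa := by
      have := P.le_mfun i (j + 1); omega
    have hba : b < a := hmono i hjpa
    have hbpi : π i < b := by
      rw [← hval]
      exact hmono i hjgt
    have hab : a ≠ b := by omega
    have hbr : i ≤ π⁻¹ b := ((hmain i).1 b).1 ⟨j, rfl⟩
    have har : i ≤ π⁻¹ a := ((hmain i).1 a).1 ⟨pa, rfl⟩
    have hbne : π⁻¹ b ≠ i := by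
      intro h
      have hb : π (π⁻¹ b) = b := π.apply_inv_self b
      rw [h] at hb
      omega
    have hane : π⁻¹ a ≠ i := by
      intro h
      have ha : π (π⁻¹ a) = a := π.apply_inv_self a
      rw [h] at ha
      omega
    have hcf : P.CrossesFrom i a b := by
      refine ⟨(i, j), hc, le_rfl, ?_⟩
      rw [P.east_eq_north, hnb, ← hpadef, hna]
      exact Set.pair_comm b a
    rcases lt_trichotomy (π⁻¹ a) (π⁻¹ b) with h | h | h
    · refine hdom ⟨i, π⁻¹ a, π⁻¹ b, by omega, h, ?_, ?_⟩
      · rw [π.apply_inv_self]; omega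
      · rw [π.apply_inv_self, π.apply_inv_self]; omega
    · exact hab (by rw [← π.apply_inv_self a, h, π.apply_inv_self])
    · have hCC := claimC π P hred hfor (π⁻¹ b - i) i a b pa j rfl hbr h hna hnb hab
      have := hCC.1 hcf
      omega
  · intro hlt
    exact P.cross_of_lt_mfun i 0 j (Nat.zero_le j) (by omega)

end PDLemmas

/-- a dominant permutation π with diagram the Young diagram of λ
has a unique reduced pipe dream, whose crossing set is D(π), and its Schubert
polynomial is the single monomial x^λ. -/
theorem stmt8 (π : Equiv.Perm ℕ) (l : ℕ → ℕ) (hπ : FinSupp π)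
    (hdom : Avoids132 π) (hl : Antitone l) (hsupp : (Function.support l).Finite)
    (hD : Rothe π = yd l) :
    (∃! P : PipeDream, P ∈ PD π)
      ∧ (∀ P ∈ PD π, (P.cross : Set (ℕ × ℕ)) = Rothe π)
      ∧ Schub π = ∏ᶠ i, (X i : MvPolynomial ℕ ℤ) ^ l i := by
  classical
  have hmain := Ncf_main π l hl hD
  have hmono := Ncf_mono l
  have hlow := Ncf_low l hl
  have hli := hli_fact π l hD
  obtain ⟨n, hn⟩ : ∃ n, ∀ i, n ≤ i → l i = 0 := by
    refine ⟨(hsupp.toFinset.sup id) + 1, fun i hi => ?_⟩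
    by_contra h
    have hmem : i ∈ hsupp.toFinset := by
      rw [Set.Finite.mem_toFinset]
      exact h
    have := Finset.le_sup (f := id) hmem
    simp at this
    omega
  have hydfin : (yd l).Finite := by
    apply Set.Finite.subset (Finset.range n ×ˢ Finset.range (l 0 + 1)).finite_toSet
    rintro ⟨i, j⟩ hij
    simp only [yd, Set.mem_setOf_eq] at hij
    simp only [Finset.coe_product, Set.mem_prod, Finset.mem_coe, Finset.mem_range]
    constructor
    · by_contra h
      push_neg at h
      rw [hn i (by omega)] at hij
      omega
    · have : l i ≤ l 0 := hl (Nat.zero_le i)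
      omega
  let P₀ : PipeDream :=
    { cross := hydfin.toFinset
      north := fun p => Ncf l p.1 p.2
      east := fun p => Ncf l p.1 (max (p.2 + 1) (l p.1))
      south := fun p => Ncf l (p.1 + 1) p.2
      west := fun p => Ncf l p.1 (max p.2 (l p.1))
      north_top := fun j => rfl
      north_succ := fun i j => rfl
      east_eq := fun i j => rfl
      south_cross := by
        rintro ⟨i, j⟩ hp
        rw [Set.Finite.mem_toFinset] at hp
        simp only [yd, Set.mem_setOf_eq] at hp
        show Ncf l (i + 1) j = Ncf l i j
        rw [Ncf_succ, if_pos hp]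
      west_cross := by
        rintro ⟨i, j⟩ hp
        rw [Set.Finite.mem_toFinset] at hp
        simp only [yd, Set.mem_setOf_eq] at hp
        show Ncf l i (max j (l i)) = Ncf l i (max (j + 1) (l i))
        congr 1
        omega
      south_bump := by
        rintro ⟨i, j⟩ hp
        rw [Set.Finite.mem_toFinset] at hp
        simp only [yd, Set.mem_setOf_eq] at hp
        push_neg at hp
        show Ncf l (i + 1) j = Ncf l i (max (j + 1) (l i))
        have hmx : max (j + 1) (l i) = j + 1 := by omega
        rw [hmx, Ncf_succ, if_neg (by omega)]
      west_bump := by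
        rintro ⟨i, j⟩ hp
        rw [Set.Finite.mem_toFinset] at hp
        simp only [yd, Set.mem_setOf_eq] at hp
        push_neg at hp
        show Ncf l i (max j (l i)) = Ncf l i j
        congr 1
        omega }
  have hcr₀ : ∀ p, p ∈ P₀.cross ↔ p.2 < l p.1 := by
    intro p
    show p ∈ hydfin.toFinset ↔ _
    rw [Set.Finite.mem_toFinset]
    exact Iff.rfl
  have hfor₀ : P₀.IsFor π := by
    intro i
    show Ncf l i (max 0 (l i)) = π i
    rw [Nat.zero_max]
    exact (hmain i).2
  have hred₀ : P₀.Reduced := by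
    have hpr : ∀ i j, j < l i →
        ({P₀.north (i, j), P₀.east (i, j)} : Set ℕ) = {(j : ℕ), π i} := by
      intro i j hj
      show ({Ncf l i j, Ncf l i (max (j + 1) (l i))} : Set ℕ) = _
      rw [hlow i j hj]
      have hmx : max (j + 1) (l i) = l i := by omega
      rw [hmx, (hmain i).2]
    rintro a b ⟨i, j⟩ ⟨i', j'⟩ ⟨hp, hpair⟩ ⟨hp', hpair'⟩
    rw [hcr₀] at hp hp'
    rw [hpr i j hp] at hpair
    rw [hpr i' j' hp'] at hpair'
    have hcomb : ({(j : ℕ), π i} : Set ℕ) = {(j' : ℕ), π i'} := hpair.trans hpair'.symm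
    rcases Set.pair_eq_pair_iff.1 hcomb with ⟨h1, h2⟩ | ⟨h1, h2⟩
    · have hii : i = i' := π.injective h2
      simp [Prod.ext_iff, hii, h1]
    · exfalso
      have hpj : j < l i := hp
      have hpj' : j' < l i' := hp'
      have := hli i
      have := hli i'
      omega
  have huniq : ∀ Q, Q ∈ PD π → Q = P₀ := by
    rintro Q ⟨hqred, hqfor⟩
    have hk := key π Q l hdom hl hD hqred hqfor
    have hcross : Q.cross = P₀.cross := by
      ext ⟨i, j⟩
      rw [(hk i).2 j, hcr₀]
    have hnorth : Q.north = P₀.north := by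
      funext p
      obtain ⟨i, j⟩ := p
      exact (hk i).1 j
    have hwest : Q.west = P₀.west := by
      funext p
      obtain ⟨i, j⟩ := p
      rw [Q.west_eq, mfun_of_row Q l i (hk i).2 j, (hk i).1]
    have heast : Q.east = P₀.east := by
      funext p
      obtain ⟨i, j⟩ := p
      rw [Q.east_eq, hwest]
    have hsouth : Q.south = P₀.south := by
      funext p
      obtain ⟨i, j⟩ := p
      rw [← Q.north_succ, hnorth]
    exact PipeDream.ext' hcross hnorth heast hsouth hwest
  have hmem₀ : P₀ ∈ PD π := ⟨hred₀, hfor₀⟩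
  have hPD : PD π = {P₀} := Set.eq_singleton_iff_unique_mem.mpr ⟨hmem₀, huniq⟩
  refine ⟨⟨P₀, hmem₀, huniq⟩, ?_, ?_⟩
  · rintro Q hQ
    have hk := key π Q l hdom hl hD hQ.1 hQ.2
    rw [hD]
    ext ⟨i, j⟩
    rw [Finset.mem_coe, (hk i).2 j]
    exact Iff.rfl
  · show (∑ᶠ P ∈ PD π, ∏ p ∈ PipeDream.cross P, (X p.1 : MvPolynomial ℕ ℤ)) = _
    rw [hPD, finsum_mem_singleton]
    have hE : P₀.cross = (Finset.range n).biUnion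
        (fun i => (Finset.range (l i)).image (fun j => (i, j))) := by
      ext ⟨i, j⟩
      rw [hcr₀]
      simp only [Finset.mem_biUnion, Finset.mem_range, Finset.mem_image]
      constructor
      · intro h
        refine ⟨i, ?_, j, h, rfl⟩
        by_contra hcon
        push_neg at hcon
        rw [hn i (by omega)] at h
        omega
      · rintro ⟨i', _, j', hj', heq⟩
        rw [Prod.mk.injEq] at heq
        obtain ⟨rfl, rfl⟩ := heq
        exact hj'
    have hdisj : (↑(Finset.range n) : Set ℕ).PairwiseDisjoint
        (fun i => (Finset.range (l i)).image (fun j => (i, j))) := by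
      intro x _ y _ hxy
      simp only [Function.onFun]
      rw [Finset.disjoint_left]
      intro p hp hq
      simp only [Finset.mem_image, Finset.mem_range] at hp hq
      obtain ⟨jx, _, rfl⟩ := hp
      obtain ⟨jy, _, heq⟩ := hq
      exact hxy (congrArg Prod.fst heq).symm
    rw [hE, Finset.prod_biUnion hdisj]
    have hrowprod : ∀ i ∈ Finset.range n,
        (∏ p ∈ (Finset.range (l i)).image (fun j => (i, j)), (X p.1 : MvPolynomial ℕ ℤ))
          = X i ^ l i := by
      intro i _
      rw [Finset.prod_image (fun x _ y _ h => congrArg Prod.snd h)]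
      simp [Finset.prod_const, Finset.card_range]
    rw [Finset.prod_congr rfl hrowprod]
    refine (finprod_eq_prod_of_mulSupport_subset _ ?_).symm
    intro i hi
    simp only [Finset.coe_range, Set.mem_Iio]
    by_contra hcon
    push_neg at hcon
    refine hi ?_
    show (X i : MvPolynomial ℕ ℤ) ^ l i = 1
    rw [hn i hcon]
    exact pow_zero _
end

section
/- Let π = dom(λ) be dominant and w ≤_L π. Then the π-padded Schubert polynomial satisfies the pipe dream formula 𝔖_w^π(x;y) = Σ_{P ∈ PD(w)} x^{P(cross)} · y^{P(bump) ∩ P(π)}, where x^S = ∏_{(i,j)∈S} x_i and y^S = ∏_{(i,j)∈S} y_i. -/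
open Equiv MvPolynomial

-- ## Auxiliary lemmas

lemma ncard_Iio_nat (n : ℕ) : (Set.Iio n).ncard = n := by
  rw [← Finset.coe_range, Set.ncard_coe_finset, Finset.card_range]

lemma ncard_Iic_nat (n : ℕ) : (Set.Iic n).ncard = n + 1 := by
  have h : (Set.Iic n) = Set.Iio (n + 1) := by
    ext m; simp [Nat.lt_succ_iff]
  rw [h, ncard_Iio_nat]

lemma conjPart_lt_iff {l : ℕ → ℕ} (hl : Antitone l) (hsupp : (Function.support l).Finite)
    (i k : ℕ) : i < conjPart l k ↔ k < l i := by
  have hfin : {m | k < l m}.Finite := hsupp.subset (fun m hm => by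
    simp only [Set.mem_setOf_eq] at hm
    exact Function.mem_support.2 (by omega))
  constructor
  · intro h
    by_contra hk
    have hsub : {m | k < l m} ⊆ Set.Iio i := by
      intro m hm
      simp only [Set.mem_setOf_eq] at hm
      by_contra hmi
      simp only [Set.mem_Iio, not_lt] at hmi
      exact hk (lt_of_lt_of_le hm (hl hmi))
    have h2 := Set.ncard_le_ncard hsub (Set.finite_Iio i)
    rw [ncard_Iio_nat] at h2
    unfold conjPart at h
    omega
  · intro h
    have hsub : Set.Iic i ⊆ {m | k < l m} := fun m hm =>
      lt_of_lt_of_le h (hl hm)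
    have h2 := Set.ncard_le_ncard hsub hfin
    rw [ncard_Iic_nat] at h2
    unfold conjPart
    omega

lemma swap_lt_iff (k x y : ℕ) :
    Equiv.swap k (k + 1) x < Equiv.swap k (k + 1) y ↔
      ((x < y ∧ ¬(x = k ∧ y = k + 1)) ∨ (x = k + 1 ∧ y = k)) := by
  simp only [Equiv.swap_apply_def]
  split_ifs <;> omega

lemma invSet_subset_of_weakCover {b c : Equiv.Perm ℕ} (h : WeakCover b c) :
    invSet b ⊆ invSet c := by
  obtain ⟨k, hc, hlen⟩ := h
  have happ : ∀ x, c x = Equiv.swap k (k + 1) (b x) := fun x => by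
    rw [hc]; rfl
  set x0 := b⁻¹ k with hx0
  set y0 := b⁻¹ (k + 1) with hy0
  have hbx0 : b x0 = k := b.apply_symm_apply k
  have hby0 : b y0 = k + 1 := b.apply_symm_apply (k + 1)
  have hxy0 : x0 ≠ y0 := fun h => by rw [h, hby0] at hbx0; omega
  rcases lt_or_gt_of_ne hxy0 with hlt | hgt
  · -- ascent case: inversions only get added
    rintro ⟨x, y⟩ ⟨hxy, hinv⟩
    refine ⟨hxy, ?_⟩
    rw [happ, happ, swap_lt_iff]
    left
    refine ⟨hinv, fun ⟨h1, h2⟩ => ?_⟩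
    have hyx0 : y = x0 := b.injective (by rw [h1, hbx0])
    have hxy0' : x = y0 := b.injective (by rw [h2, hby0])
    omega
  · -- descent case: impossible by the length condition
    exfalso
    have hEq : invSet c = invSet b \ {(y0, x0)} := by
      ext ⟨x, y⟩
      constructor
      · rintro ⟨hxy, hinv⟩
        rw [happ, happ, swap_lt_iff] at hinv
        rcases hinv with ⟨h1, h2⟩ | ⟨h1, h2⟩
        · refine ⟨⟨hxy, h1⟩, fun hmem => ?_⟩
          simp only [Set.mem_singleton_iff, Prod.mk.injEq] at hmem
          obtain ⟨hx, hy⟩ := hmem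
          exact h2 ⟨by rw [hy, hbx0], by rw [hx, hby0]⟩
        · have : y = y0 := b.injective (by rw [h1, hby0])
          have : x = x0 := b.injective (by rw [h2, hbx0])
          omega
      · rintro ⟨⟨hxy, hinv⟩, hne⟩
        refine ⟨hxy, ?_⟩
        rw [happ, happ, swap_lt_iff]
        left
        refine ⟨hinv, fun ⟨h1, h2⟩ => ?_⟩
        apply hne
        simp only [Set.mem_singleton_iff, Prod.mk.injEq]
        exact ⟨b.injective (by rw [h2, hby0]), b.injective (by rw [h1, hbx0])⟩
    have hmem : (y0, x0) ∈ invSet b := ⟨hgt, by rw [hbx0, hby0]; omega⟩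
    by_cases hbf : (invSet b).Finite
    · have h1 : len c = len b - 1 := by
        unfold len
        rw [hEq, Set.ncard_diff_singleton_of_mem hmem]
      have h2 : 1 ≤ len b := by
        unfold len
        exact (Set.ncard_pos hbf).2 ⟨_, hmem⟩
      omega
    · have hbinf : (invSet b).Infinite := hbf
      have hcinf : (invSet c).Infinite := by
        rw [hEq]; exact hbinf.diff (Set.finite_singleton _)
      have h1 : len b = 0 := hbinf.ncard
      have h2 : len c = 0 := hcinf.ncard
      omega

lemma invSet_mono {w π : Equiv.Perm ℕ} (h : leL w π) : invSet w ⊆ invSet π := by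
  induction h with
  | refl => exact subset_rfl
  | tail _ hbc ih => exact ih.trans (invSet_subset_of_weakCover hbc)

-- ## The boundary-word machinery for pipe dreams

namespace PipeDream

variable (P : PipeDream) (w : Equiv.Perm ℕ)

/-- The boundary word at the stage where rows `< i` are fully processed and
row `i` is processed at all columns `≥ j`. -/
def del (i j : ℕ) : ℕ → ℕ := fun m =>
  if m < i then w m
  else if m < i + j then P.north (i, m - i)
  else if m = i + j then P.west (i, j)
  else P.south (i, m - i - 1)

/-- The boundary word after processing all rows `< i`. -/
def gam (i : ℕ) : ℕ → ℕ := fun m =>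
  if m < i then w m else P.north (i, m - i)

variable {P w}
variable {N : ℕ}

lemma notCross (hN : ∀ p ∈ P.cross, p.1 < N ∧ p.2 < N) {i j : ℕ} (hj : N ≤ j) :
    (i, j) ∉ P.cross := fun hc => absurd (hN _ hc).2 (by omega)

lemma del_eq_gam (hN : ∀ p ∈ P.cross, p.1 < N ∧ p.2 < N) (i j : ℕ) (hj : N ≤ j) :
    del P w i j = gam P w i := by
  funext m
  unfold del gam
  by_cases h1 : m < i
  · simp [h1]
  · simp only [if_neg h1]
    by_cases h2 : m < i + j
    · rw [if_pos h2]
    · by_cases h3 : m = i + j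
      · rw [if_neg h2, if_pos h3, h3]
        simp only [Nat.add_sub_cancel_left]
        exact P.west_bump _ (notCross hN hj)
      · rw [if_neg h2, if_neg h3]
        have hm : i + j < m := by omega
        have hc1 : (i, m - i - 1) ∉ P.cross := notCross hN (by omega)
        have hc2 : (i, m - i - 1 + 1) ∉ P.cross := notCross hN (by omega)
        rw [P.south_bump _ hc1, P.east_eq, P.west_bump _ hc2]
        have hx : m - i - 1 + 1 = m - i := by omega
        rw [hx]

lemma del_bump {i j : ℕ} (h : (i, j) ∉ P.cross) :
    del P w i j = del P w i (j + 1) := by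
  funext m
  unfold del
  by_cases h1 : m < i
  · simp [h1]
  · simp only [if_neg h1]
    by_cases h2 : m < i + j
    · have c1 : m < i + (j + 1) := by omega
      rw [if_pos h2, if_pos c1]
    · by_cases h3 : m = i + j
      · have c1 : m < i + (j + 1) := by omega
        rw [if_neg h2, if_pos h3, if_pos c1]
        rw [P.west_bump _ h]
        have hx : j = m - i := by omega
        rw [← hx]
      · by_cases h4 : m = i + j + 1
        · have c1 : ¬ m < i + (j + 1) := by omega
          have c2 : m = i + (j + 1) := by omega
          rw [if_neg h2, if_neg h3, if_neg c1, if_pos c2]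
          have hx : m - i - 1 = j := by omega
          rw [hx, P.south_bump _ h, P.east_eq]
        · have c1 : ¬ m < i + (j + 1) := by omega
          have c2 : ¬ m = i + (j + 1) := by omega
          rw [if_neg h2, if_neg h3, if_neg c1, if_neg c2]

lemma del_cross {i j : ℕ} (h : (i, j) ∈ P.cross) :
    del P w i j = del P w i (j + 1) ∘ Equiv.swap (i + j) (i + j + 1) := by
  funext m
  simp only [Function.comp_apply]
  by_cases hm1 : m = i + j
  · subst hm1
    rw [Equiv.swap_apply_left]
    unfold del
    have c1 : ¬ i + j < i := by omega
    have c2 : ¬ i + j < i + j := by omega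
    have c3 : ¬ i + j + 1 < i := by omega
    have c4 : i + j + 1 < i + (j + 1) ∨ i + j + 1 = i + (j + 1) := by omega
    have c5 : ¬ i + j + 1 < i + (j + 1) := by omega
    have c6 : i + j + 1 = i + (j + 1) := by omega
    rw [if_neg c1, if_neg c2, if_pos rfl, if_neg c3, if_neg c5, if_pos c6]
    rw [P.west_cross _ h, P.east_eq]
  · by_cases hm2 : m = i + j + 1
    · subst hm2
      rw [Equiv.swap_apply_right]
      unfold del
      have c1 : ¬ i + j + 1 < i := by omega
      have c2 : ¬ i + j + 1 < i + j := by omega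
      have c3 : ¬ i + j + 1 = i + j := by omega
      have c4 : ¬ i + j < i := by omega
      have c5 : i + j < i + (j + 1) := by omega
      rw [if_neg c1, if_neg c2, if_neg c3, if_neg c4, if_pos c5]
      have hx : i + j + 1 - i - 1 = j := by omega
      rw [hx, P.south_cross _ h]
      have hy : j = i + j - i := by omega
      rw [← hy]
    · rw [Equiv.swap_apply_of_ne_of_ne hm1 hm2]
      unfold del
      by_cases h1 : m < i
      · simp [h1]
      · simp only [if_neg h1]
        by_cases h2 : m < i + j
        · have c1 : m < i + (j + 1) := by omega
          rw [if_pos h2, if_pos c1]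
        · have c1 : ¬ m < i + (j + 1) := by omega
          have c2 : ¬ m = i + (j + 1) := by omega
          rw [if_neg h2, if_neg hm1, if_neg c1, if_neg c2]

lemma del_zero_eq_gam (hfor : P.IsFor w) (i : ℕ) :
    del P w i 0 = gam P w (i + 1) := by
  funext m
  unfold del gam
  by_cases h1 : m < i
  · have c1 : m < i + 1 := by omega
    rw [if_pos h1, if_pos c1]
  · by_cases h2 : m = i
    · subst h2
      have c1 : ¬ m < m + 0 := by omega
      have c2 : m = m + 0 := by omega
      have c3 : m < m + 1 := by omega
      rw [if_neg h1, if_neg c1, if_pos c2, if_pos c3]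
      exact hfor m
    · have c1 : ¬ m < i + 0 := by omega
      have c2 : ¬ m = i + 0 := by omega
      have c3 : ¬ m < i + 1 := by omega
      rw [if_neg h1, if_neg c1, if_neg c2, if_neg c3]
      rw [P.north_succ]
      have hx : m - (i + 1) = m - i - 1 := by omega
      rw [hx]

lemma gam_zero : gam P w 0 = id := by
  funext m
  unfold gam
  simp [P.north_top]

lemma del_bijective (hN : ∀ p ∈ P.cross, p.1 < N ∧ p.2 < N) (hfor : P.IsFor w) :
    ∀ i j, Function.Bijective (del P w i j) := by
  have key : ∀ i, Function.Bijective (gam P w i) →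
      ∀ j, Function.Bijective (del P w i j) := by
    intro i hg
    have H : ∀ d j, N ≤ j + d → Function.Bijective (del P w i j) := by
      intro d
      induction d with
      | zero =>
        intro j hj
        rw [del_eq_gam hN i j (by omega)]
        exact hg
      | succ d ih =>
        intro j hj
        by_cases hjN : N ≤ j
        · rw [del_eq_gam hN i j hjN]; exact hg
        · have h2 : Function.Bijective (del P w i (j + 1)) := ih (j + 1) (by omega)
          by_cases hc : (i, j) ∈ P.cross
          · rw [del_cross hc]
            exact h2.comp (Equiv.swap (i + j) (i + j + 1)).bijective
          · rw [del_bump hc]; exact h2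
    intro j
    exact H N j (by omega)
  have hgam : ∀ i, Function.Bijective (gam P w i) := by
    intro i
    induction i with
    | zero => rw [gam_zero]; exact Function.bijective_id
    | succ i ih =>
      rw [← del_zero_eq_gam hfor i]
      exact key i ih 0
  intro i j
  exact key i (hgam i) j

noncomputable def pos (P : PipeDream) (w : Equiv.Perm ℕ) (i j u : ℕ) : ℕ :=
  Function.invFun (del P w i j) u

lemma pos_spec (hN : ∀ p ∈ P.cross, p.1 < N ∧ p.2 < N) (hfor : P.IsFor w) (i j u : ℕ) :
    del P w i j (pos P w i j u) = u :=
  Function.invFun_eq ((del_bijective hN hfor i j).2 u)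

lemma pos_eq (hN : ∀ p ∈ P.cross, p.1 < N ∧ p.2 < N) (hfor : P.IsFor w) {i j m u : ℕ}
    (h : del P w i j m = u) : pos P w i j u = m :=
  (del_bijective hN hfor i j).1 (by rw [pos_spec hN hfor, ← h])

def Before (P : PipeDream) (w : Equiv.Perm ℕ) (i j u v : ℕ) : Prop :=
  pos P w i j u < pos P w i j v

lemma before_congr {i1 j1 i2 j2 : ℕ} (h : del P w i1 j1 = del P w i2 j2) (u v : ℕ) :
    Before P w i1 j1 u v ↔ Before P w i2 j2 u v := by
  unfold Before pos
  rw [h]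

variable (hN : ∀ p ∈ P.cross, p.1 < N ∧ p.2 < N) (hfor : P.IsFor w)
include hN hfor

lemma north_eq_del {i c : ℕ} : P.north (i, c) = del P w i (c + 1) (i + c) := by
  unfold del
  have c1 : ¬ i + c < i := by omega
  have c2 : i + c < i + (c + 1) := by omega
  rw [if_neg c1, if_pos c2]
  have hx : i + c - i = c := by omega
  rw [hx]

lemma east_eq_del {i c : ℕ} : P.east (i, c) = del P w i (c + 1) (i + c + 1) := by
  unfold del
  have c1 : ¬ i + c + 1 < i := by omega
  have c2 : ¬ i + c + 1 < i + (c + 1) := by omega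
  have c3 : i + c + 1 = i + (c + 1) := by omega
  rw [if_neg c1, if_neg c2, if_pos c3]
  exact P.east_eq i c

lemma before_step {u v : ℕ} (huv : u ≠ v) {i c : ℕ} (h : ¬ P.CrossAt u v (i, c)) :
    Before P w i c u v ↔ Before P w i (c + 1) u v := by
  by_cases hc : (i, c) ∈ P.cross
  · have hd := del_cross (P := P) (w := w) hc
    have hswap : ∀ x, pos P w i c x = Equiv.swap (i + c) (i + c + 1) (pos P w i (c + 1) x) := by
      intro x
      apply pos_eq hN hfor
      rw [hd, Function.comp_apply, Equiv.swap_apply_self]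
      exact pos_spec hN hfor _ _ _
    have hpairu : pos P w i (c + 1) u = i + c → u = P.north (i, c) := by
      intro hp
      rw [north_eq_del hN hfor, ← hp, pos_spec hN hfor]
    have hpairu' : pos P w i (c + 1) u = i + c + 1 → u = P.east (i, c) := by
      intro hp
      rw [east_eq_del hN hfor, ← hp, pos_spec hN hfor]
    have hpairv : pos P w i (c + 1) v = i + c → v = P.north (i, c) := by
      intro hp
      rw [north_eq_del hN hfor, ← hp, pos_spec hN hfor]
    have hpairv' : pos P w i (c + 1) v = i + c + 1 → v = P.east (i, c) := by
      intro hp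
      rw [east_eq_del hN hfor, ← hp, pos_spec hN hfor]
    have hmis : ¬ ((pos P w i (c + 1) u = i + c ∧ pos P w i (c + 1) v = i + c + 1) ∨
        (pos P w i (c + 1) u = i + c + 1 ∧ pos P w i (c + 1) v = i + c)) := by
      rintro (⟨h1, h2⟩ | ⟨h1, h2⟩)
      · exact h ⟨hc, by rw [hpairu h1, hpairv' h2]⟩
      · exact h ⟨hc, by rw [hpairu' h1, hpairv h2, Set.pair_comm]⟩
    unfold Before
    rw [hswap u, hswap v]
    simp only [Equiv.swap_apply_def]
    split_ifs <;> omega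
  · exact before_congr (del_bump hc) u v

lemma before_row {u v : ℕ} (huv : u ≠ v) (i : ℕ) :
    ∀ j j', j ≤ j' → (∀ c, j ≤ c → c < j' → ¬ P.CrossAt u v (i, c)) →
      (Before P w i j u v ↔ Before P w i j' u v) := by
  intro j j' hle
  induction j', hle using Nat.le_induction with
  | base => intro _; rfl
  | succ j' hj ih =>
    intro hflip
    rw [ih (fun c hc1 hc2 => hflip c hc1 (by omega))]
    exact before_step hN hfor huv (hflip j' hj (by omega))

lemma before_init {u v : ℕ} (huv : u ≠ v) :
    ∀ i j, (∀ q, P.CrossAt u v q → ¬ (q.1 < i ∨ (q.1 = i ∧ j ≤ q.2))) →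
      (Before P w i j u v ↔ u < v) := by
  intro i
  induction i with
  | zero =>
    intro j hflip
    rw [before_row hN hfor huv 0 j (max j N) (le_max_left _ _)
      (fun c hc1 _ hca => (hflip _ hca) (Or.inr ⟨rfl, hc1⟩))]
    have h2 : del P w 0 (max j N) = id := by
      rw [del_eq_gam hN 0 _ (le_max_right _ _), gam_zero]
    unfold Before
    rw [pos_eq hN hfor (by rw [h2]; rfl), pos_eq hN hfor (by rw [h2]; rfl)]
  | succ i ih =>
    intro j hflip
    rw [before_row hN hfor huv (i + 1) j (max j N) (le_max_left _ _)
      (fun c hc1 _ hca => (hflip _ hca) (Or.inr ⟨rfl, hc1⟩))]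
    rw [before_congr (by
      rw [del_eq_gam hN _ _ (le_max_right j N), ← del_zero_eq_gam hfor] :
      del P w (i + 1) (max j N) = del P w i 0) u v]
    apply ih 0
    intro q hq hor
    apply hflip q hq
    rcases hor with h | ⟨h, _⟩
    · exact Or.inl (by omega)
    · exact Or.inl (by omega)

lemma pos_of_exit_lt {i j x : ℕ} (h : w⁻¹ x < i) : pos P w i j x = w⁻¹ x := by
  apply pos_eq hN hfor
  unfold del
  rw [if_pos h]
  exact w.apply_symm_apply x

lemma before_final {u v : ℕ} (huv : u ≠ v) :
    ∀ k i j, max (w⁻¹ u) (w⁻¹ v) < i + k →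
      (∀ q, P.CrossAt u v q → ¬ (i < q.1 ∨ (q.1 = i ∧ q.2 < j))) →
      (Before P w i j u v ↔ w⁻¹ u < w⁻¹ v) := by
  intro k
  induction k with
  | zero =>
    intro i j hbound _
    unfold Before
    rw [pos_of_exit_lt hN hfor (by omega), pos_of_exit_lt hN hfor (by omega)]
  | succ k ih =>
    intro i j hbound hflip
    rw [← before_row hN hfor huv i 0 j (by omega)
      (fun c _ hc2 hca => (hflip _ hca) (Or.inr ⟨rfl, hc2⟩))]
    rw [before_congr (by
      rw [del_zero_eq_gam hfor, ← del_eq_gam hN (i + 1) N le_rfl] :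
      del P w i 0 = del P w (i + 1) N) u v]
    apply ih (i + 1) N (by omega)
    intro q hq hor
    apply hflip q hq
    rcases hor with h | ⟨h, _⟩
    · exact Or.inl (by omega)
    · exact Or.inl (by omega)

lemma south_eq_del (i j : ℕ) : P.south (i, j) = del P w i 0 (i + j + 1) := by
  unfold del
  have c1 : ¬ i + j + 1 < i := by omega
  have c2 : ¬ i + j + 1 < i + 0 := by omega
  have c3 : ¬ i + j + 1 = i + 0 := by omega
  rw [if_neg c1, if_neg c2, if_neg c3]
  have hx : i + j + 1 - i - 1 = j := by omega
  rw [hx]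

lemma winv_south_gt (i j : ℕ) : i < w⁻¹ (P.south (i, j)) := by
  by_contra hcon
  push_neg at hcon
  set s := P.south (i, j) with hs
  have h1 : del P w i 0 (w⁻¹ s) = s := by
    unfold del
    rcases lt_or_eq_of_le hcon with h' | h'
    · rw [if_pos h']
      exact w.apply_symm_apply s
    · have c1 : ¬ w⁻¹ s < i := by omega
      have c2 : ¬ w⁻¹ s < i + 0 := by omega
      have c3 : w⁻¹ s = i + 0 := by omega
      rw [if_neg c1, if_neg c2, if_pos c3]
      rw [hfor i, ← h', Equiv.Perm.inv_def, w.apply_symm_apply]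
  have h2 : del P w i 0 (i + j + 1) = s := (south_eq_del hN hfor i j).symm
  have h3 := (del_bijective hN hfor i 0).1 (h1.trans h2.symm)
  omega

lemma south_inj (i : ℕ) : Function.Injective (fun j => P.south (i, j)) := by
  intro a b h
  simp only at h
  rw [south_eq_del hN hfor, south_eq_del hN hfor] at h
  have := (del_bijective hN hfor i 0).1 h
  omega

lemma south_surj {i a : ℕ} (h : i < a) : ∃ j, P.south (i, j) = w a := by
  obtain ⟨m, hm⟩ := (del_bijective hN hfor i 0).2 (w a)
  unfold del at hm
  by_cases h1 : m < i
  · rw [if_pos h1] at hm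
    have := w.injective hm
    omega
  · by_cases h2 : m = i + 0
    · exfalso
      have c1 : ¬ m < i + 0 := by omega
      rw [if_neg h1, if_neg c1, if_pos h2] at hm
      rw [hfor i] at hm
      have := w.injective hm
      omega
    · have c1 : ¬ m < i + 0 := by omega
      rw [if_neg h1, if_neg c1, if_neg h2] at hm
      exact ⟨m - i - 1, hm⟩

lemma cross_main (hred : P.Reduced) {i j : ℕ} (hc : (i, j) ∈ P.cross) :
    P.north (i, j) < P.east (i, j) ∧
      w⁻¹ (P.east (i, j)) < w⁻¹ (P.north (i, j)) ∧ i ≤ w⁻¹ (P.east (i, j)) := by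
  set s := P.north (i, j) with hs
  set t := P.east (i, j) with ht
  have hst : s ≠ t := by
    intro h
    have h1 : del P w i (j + 1) (i + j) = del P w i (j + 1) (i + j + 1) := by
      rw [← north_eq_del hN hfor, ← east_eq_del hN hfor, ← hs, ← ht, h]
    have := (del_bijective hN hfor i (j + 1)).1 h1
    omega
  have hCA : P.CrossAt s t (i, j) := ⟨hc, rfl⟩
  have hCA' : P.CrossAt t s (i, j) := ⟨hc, Set.pair_comm _ _⟩
  have huniq : ∀ q, P.CrossAt s t q → q = (i, j) := fun q hq => hred _ _ _ _ hq hCA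
  have huniq' : ∀ q, P.CrossAt t s q → q = (i, j) := fun q hq => hred _ _ _ _ hq hCA'
  -- s < t
  have hb1 : Before P w i (j + 1) s t := by
    unfold Before
    rw [pos_eq hN hfor (north_eq_del hN hfor).symm,
      pos_eq hN hfor (east_eq_del hN hfor).symm]
    omega
  have h1 : s < t := by
    rw [← before_init hN hfor hst i (j + 1)
      (fun q hq => by
        rw [huniq q hq]
        show ¬ (i < i ∨ (i = i ∧ j + 1 ≤ j))
        omega)]
    exact hb1
  -- exits
  have hd1 : del P w i j (i + j) = t := by
    unfold del
    have c1 : ¬ i + j < i := by omega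
    have c2 : ¬ i + j < i + j := by omega
    rw [if_neg c1, if_neg c2, if_pos rfl]
    exact P.west_cross _ hc
  have hd2 : del P w i j (i + j + 1) = s := by
    unfold del
    have c1 : ¬ i + j + 1 < i := by omega
    have c2 : ¬ i + j + 1 < i + j := by omega
    have c3 : ¬ i + j + 1 = i + j := by omega
    rw [if_neg c1, if_neg c2, if_neg c3]
    have hx : i + j + 1 - i - 1 = j := by omega
    rw [hx]
    exact P.south_cross _ hc
  have hb2 : Before P w i j t s := by
    unfold Before
    rw [pos_eq hN hfor hd1, pos_eq hN hfor hd2]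
    omega
  have h2 : w⁻¹ t < w⁻¹ s := by
    rw [← before_final hN hfor hst.symm (max (w⁻¹ t) (w⁻¹ s) + 1) i j (by omega)
      (fun q hq => by
        rw [huniq' q hq]
        show ¬ (i < i ∨ (i = i ∧ j < j))
        omega)]
    exact hb2
  have h3 : i ≤ w⁻¹ t := by
    by_contra hcon
    push_neg at hcon
    have := pos_of_exit_lt hN hfor (i := i) (j := j + 1) (x := t) hcon
    rw [pos_eq hN hfor (east_eq_del hN hfor (i := i) (c := j)).symm] at this
    omega
  exact ⟨h1, h2, h3⟩

end PipeDream

-- ## Dominant-permutation lemmas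

lemma l_le_pi {π : Equiv.Perm ℕ} {l : ℕ → ℕ} (hD : Rothe π = yd l) (a : ℕ) :
    l a ≤ π a := by
  by_cases h : l a = 0
  · omega
  · have hmem : ((a, l a - 1) : ℕ × ℕ) ∈ yd l := by
      show l a - 1 < l a
      omega
    rw [← hD] at hmem
    have h2 : l a - 1 < π a := hmem.2
    omega

lemma inv_lt_iff {π : Equiv.Perm ℕ} {l : ℕ → ℕ} (hD : Rothe π = yd l) {x y : ℕ}
    (hxy : x < y) : π y < π x ↔ π y < l x := by
  constructor
  · intro h
    have hmem : ((x, π y) : ℕ × ℕ) ∈ Rothe π :=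
      ⟨show x < π⁻¹ (π y) by rw [Equiv.Perm.inv_def, Equiv.symm_apply_apply]; exact hxy, h⟩
    rw [hD] at hmem
    exact hmem
  · intro h
    have hmem : ((x, π y) : ℕ × ℕ) ∈ yd l := h
    rw [← hD] at hmem
    exact hmem.2

section Counting

variable {π w : Equiv.Perm ℕ} {l : ℕ → ℕ} {P : PipeDream} {N : ℕ}

lemma row_finite_card (hl : Antitone l) (hsupp : (Function.support l).Finite)
    (hD : Rothe π = yd l) (hN : ∀ p ∈ P.cross, p.1 < N ∧ p.2 < N) (hfor : P.IsFor w)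
    (i : ℕ) :
    {j | (i, j) ∈ dominated π l w P}.Finite ∧
      {j | (i, j) ∈ dominated π l w P}.ncard = l i := by
  have hrow : {j | (i, j) ∈ dominated π l w P} =
      {j | π (w⁻¹ (P.south (i, j))) < l i} := by
    ext j
    simp only [dominated, Set.mem_setOf_eq]
    exact conjPart_lt_iff hl hsupp i _
  set φ : ℕ → ℕ := fun j => w⁻¹ (P.south (i, j)) with hφ
  have hφinj : Function.Injective φ := by
    intro a b h
    exact PipeDream.south_inj hN hfor i ((w⁻¹).injective h)
  have hA : φ '' {j | π (φ j) < l i} = {a | π a < l i} := by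
    apply Set.Subset.antisymm
    · rintro a ⟨j, hj, rfl⟩
      exact hj
    · intro a ha
      simp only [Set.mem_setOf_eq] at ha
      have hai : i < a := by
        by_contra hcon
        push_neg at hcon
        have h1 : l i ≤ l a := hl hcon
        have h2 : l a ≤ π a := l_le_pi hD a
        omega
      obtain ⟨j, hj⟩ := PipeDream.south_surj hN hfor hai
      refine ⟨j, ?_, ?_⟩
      · simp only [Set.mem_setOf_eq, hφ, hj, Equiv.Perm.inv_def, Equiv.symm_apply_apply]
        exact ha
      · simp only [hφ, hj, Equiv.Perm.inv_def, Equiv.symm_apply_apply]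
  have hpre : {a | π a < l i} = π ⁻¹' (Set.Iio (l i)) := rfl
  have hAfin : {a | π a < l i}.Finite := by
    rw [hpre]
    exact (Set.finite_Iio _).preimage π.injective.injOn
  have hAcard : {a | π a < l i}.ncard = l i := by
    have himg : π '' {a | π a < l i} = Set.Iio (l i) := by
      rw [hpre, Set.image_preimage_eq _ π.surjective]
    have h2 := Set.ncard_image_of_injective {a | π a < l i} π.injective
    rw [himg, ncard_Iio_nat] at h2
    omega
  rw [hrow]
  constructor
  · exact Set.Finite.of_finite_image (hA ▸ hAfin) hφinj.injOn
  · have h2 := Set.ncard_image_of_injective {j | π (φ j) < l i} hφinj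
    rw [hA, hAcard] at h2
    exact h2.symm

lemma dominated_lpos {q : ℕ × ℕ} (hl : Antitone l) (hsupp : (Function.support l).Finite)
    (hq : q ∈ dominated π l w P) : l q.1 ≠ 0 := by
  have h1 : q.1 < conjPart l (π (w⁻¹ (P.south q))) := hq
  rw [conjPart_lt_iff hl hsupp] at h1
  omega

lemma dominated_finite (hl : Antitone l) (hsupp : (Function.support l).Finite)
    (hD : Rothe π = yd l) (hN : ∀ p ∈ P.cross, p.1 < N ∧ p.2 < N) (hfor : P.IsFor w) :
    (dominated π l w P).Finite := by
  apply Set.Finite.subset (Set.Finite.biUnion hsupp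
    (fun i _ => ((row_finite_card hl hsupp hD hN hfor i).1.image (fun j => (i, j)))))
  rintro ⟨x, y⟩ hq
  have hx : x ∈ Function.support l := dominated_lpos hl hsupp hq
  exact Set.mem_biUnion hx ⟨y, hq, rfl⟩

lemma cross_sub_dom (hl : Antitone l) (hsupp : (Function.support l).Finite)
    (hD : Rothe π = yd l) (hw : leL w π) (hN : ∀ p ∈ P.cross, p.1 < N ∧ p.2 < N)
    (hred : P.Reduced) (hfor : P.IsFor w) :
    ∀ p ∈ P.cross, p ∈ dominated π l w P := by
  rintro ⟨i, j⟩ hp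
  obtain ⟨h1, h2, h3⟩ := PipeDream.cross_main hN hfor hred hp
  set s := P.north (i, j) with hs
  set t := P.east (i, j) with ht
  have hsouth : P.south (i, j) = s := P.south_cross _ hp
  have hwa : w (w⁻¹ s) = s := w.apply_symm_apply s
  have hwb : w (w⁻¹ t) = t := w.apply_symm_apply t
  have hinv : ((w⁻¹ t, w⁻¹ s) : ℕ × ℕ) ∈ invSet w := ⟨h2, by rw [hwa, hwb]; exact h1⟩
  have hπ : π (w⁻¹ s) < π (w⁻¹ t) := (invSet_mono hw hinv).2
  have hπ2 : π (w⁻¹ s) < l (w⁻¹ t) := (inv_lt_iff hD h2).1 hπ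
  have hlb : l (w⁻¹ t) ≤ l i := hl h3
  show (i, j).1 < conjPart l (π (w⁻¹ (P.south (i, j))))
  rw [hsouth]
  show i < conjPart l (π (w⁻¹ s))
  rw [conjPart_lt_iff hl hsupp]
  omega

end Counting

-- ## Nonvanishing lemmas

lemma Xv_ne_zero (i : ℕ) : Xv i ≠ 0 := by
  unfold Xv
  intro h
  have h2 : (X (Sum.inl i) : PolyXY) = 0 :=
    IsFractionRing.injective PolyXY RatXY (by rw [h, map_zero])
  exact MvPolynomial.X_ne_zero (R := ℤ) _ h2

lemma Yv_ne_zero (i : ℕ) : Yv i ≠ 0 := by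
  unfold Yv
  intro h
  have h2 : (X (Sum.inr i) : PolyXY) = 0 :=
    IsFractionRing.injective PolyXY RatXY (by rw [h, map_zero])
  exact MvPolynomial.X_ne_zero (R := ℤ) _ h2

lemma finprod_mem_ne_zero {α : Type*} {f : α → RatXY} {s : Set α} (h : ∀ i, f i ≠ 0) :
    (∏ᶠ i ∈ s, f i) ≠ 0 := by
  by_cases hfin : (s ∩ Function.mulSupport f).Finite
  · rw [finprod_mem_eq_prod f hfin]
    exact Finset.prod_ne_zero_iff.2 (fun i _ => h i)
  · rw [finprod_mem_eq_one_of_infinite hfin]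
    exact one_ne_zero

/-- the pipe dream formula for the π-padded Schubert polynomial:
𝔖_w^π(x;y) = Σ_{P ∈ PD(w)} x^{P(cross)} y^{P(bump) ∩ P(π)}. -/
theorem stmt11 (π w : Equiv.Perm ℕ) (l : ℕ → ℕ) (hπ : FinSupp π)
    (hdom : Avoids132 π) (hl : Antitone l) (hsupp : (Function.support l).Finite)
    (hD : Rothe π = yd l) (hw : leL w π) :
    padded l w = ∑ᶠ P ∈ PD w,
      (∏ p ∈ P.cross, Xv p.1) *
        ∏ᶠ q ∈ ({q : ℕ × ℕ | q ∉ P.cross} ∩ dominated π l w P), Yv q.1 := by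
  classical
  rcases Set.finite_or_infinite (PD w) with hfin | hinf
  · -- finite case
    unfold padded Schub
    rw [← hfin.coe_toFinset, finsum_mem_coe_finset, finsum_mem_coe_finset,
      map_sum, Finset.mul_sum]
    apply Finset.sum_congr rfl
    intro P hP
    rw [Set.Finite.mem_toFinset] at hP
    obtain ⟨hred, hfor⟩ := hP
    set N := (P.cross.sup fun p => max p.1 p.2) + 1 with hNdef
    have hN : ∀ p ∈ P.cross, p.1 < N ∧ p.2 < N := by
      intro p hp
      have hm := Finset.le_sup (f := fun p : ℕ × ℕ => max p.1 p.2) hp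
      have hm1 : p.1 ≤ P.cross.sup fun p : ℕ × ℕ => max p.1 p.2 :=
        le_trans (le_max_left _ _) hm
      have hm2 : p.2 ≤ P.cross.sup fun p : ℕ × ℕ => max p.1 p.2 :=
        le_trans (le_max_right _ _) hm
      omega
    rw [map_prod]
    simp only [aeval_X]
    -- set up the dominated set
    have hDfin : (dominated π l w P).Finite := dominated_finite hl hsupp hD hN hfor
    have hCD : P.cross ⊆ hDfin.toFinset := fun p hp =>
      hDfin.mem_toFinset.2 (cross_sub_dom hl hsupp hD hw hN hred hfor p hp)
    have hS : ({q : ℕ × ℕ | q ∉ P.cross} ∩ dominated π l w P) =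
        ↑(hDfin.toFinset \ P.cross) := by
      ext q
      simp only [Set.mem_inter_iff, Set.mem_setOf_eq, Finset.coe_sdiff, Set.mem_diff,
        Finset.mem_coe, Set.Finite.coe_toFinset]
      tauto
    rw [hS, finprod_mem_coe_finset]
    -- the fiber counts
    have hfib : ∀ i : ℕ, (hDfin.toFinset.filter (fun q => q.1 = i)).card = l i := by
      intro i
      have hinj : Function.Injective (fun j => ((i, j) : ℕ × ℕ)) := by
        intro a b h
        exact (Prod.ext_iff.1 h).2
      have h1 : ↑(hDfin.toFinset.filter (fun q => q.1 = i)) =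
          (fun j => ((i, j) : ℕ × ℕ)) '' {j | (i, j) ∈ dominated π l w P} := by
        ext q
        simp only [Finset.coe_filter, Set.mem_setOf_eq, Set.Finite.mem_toFinset,
          Set.mem_image]
        constructor
        · rintro ⟨hq, hq1⟩
          exact ⟨q.2, by rw [show ((i, q.2) : ℕ × ℕ) = q by rw [← hq1]]; exact hq,
            by rw [← hq1]⟩
        · rintro ⟨j, hj, rfl⟩
          exact ⟨hj, rfl⟩
      have h2 := Set.ncard_coe_finset (hDfin.toFinset.filter (fun q => q.1 = i))
      rw [h1, Set.ncard_image_of_injective _ hinj,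
        (row_finite_card hl hsupp hD hN hfor i).2] at h2
      omega
    have hmaps : ∀ q ∈ hDfin.toFinset, q.1 ∈ hsupp.toFinset := by
      intro q hq
      rw [Set.Finite.mem_toFinset] at hq ⊢
      exact dominated_lpos hl hsupp hq
    have hYlam : (∏ᶠ i, Yv i ^ l i) = ∏ q ∈ hDfin.toFinset, Yv q.1 := by
      rw [finprod_eq_prod_of_mulSupport_subset (s := hsupp.toFinset) _ (by
        intro i hi
        rw [Function.mem_mulSupport] at hi
        rw [Set.Finite.coe_toFinset, Function.mem_support]
        intro h0
        exact hi (by rw [h0, pow_zero]))]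
      rw [← Finset.prod_fiberwise_of_maps_to hmaps (fun q => Yv q.1)]
      apply Finset.prod_congr rfl
      intro i _
      have h1 : (∏ q ∈ hDfin.toFinset.filter (fun q => q.1 = i), Yv q.1) = Yv i ^ l i := by
        rw [show (∏ q ∈ hDfin.toFinset.filter (fun q => q.1 = i), Yv q.1) =
            ∏ q ∈ hDfin.toFinset.filter (fun q => q.1 = i), Yv i from
          Finset.prod_congr rfl (fun q hq => by rw [(Finset.mem_filter.1 hq).2]),
          Finset.prod_const, hfib i]
      exact h1.symm
    rw [hYlam, ← Finset.prod_sdiff hCD, mul_assoc, ← Finset.prod_mul_distrib]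
    have h2 : ∀ p ∈ P.cross, Yv p.1 * (Xv p.1 / Yv p.1) = Xv p.1 := fun p _ => by
      rw [mul_comm, div_mul_cancel₀ _ (Yv_ne_zero _)]
    rw [Finset.prod_congr rfl h2, mul_comm]
  · -- infinite case
    have hSchub : Schub w = 0 := by
      unfold Schub
      apply finsum_mem_eq_zero_of_infinite
      have heq : PD w ∩ Function.support
          (fun P : PipeDream => ∏ p ∈ P.cross, (X p.1 : MvPolynomial ℕ ℤ)) = PD w :=
        Set.inter_eq_left.2 fun P _ =>
          Finset.prod_ne_zero_iff.2 (fun p _ => MvPolynomial.X_ne_zero _)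
      rw [heq]
      exact hinf
    unfold padded
    rw [hSchub, map_zero, mul_zero]
    symm
    apply finsum_mem_eq_zero_of_infinite
    have heq : PD w ∩ Function.support
        (fun P : PipeDream => (∏ p ∈ P.cross, Xv p.1) *
          ∏ᶠ q ∈ ({q : ℕ × ℕ | q ∉ P.cross} ∩ dominated π l w P), Yv q.1) = PD w :=
      Set.inter_eq_left.2 fun P _ => mul_ne_zero
        (Finset.prod_ne_zero_iff.2 (fun p _ => Xv_ne_zero _))
        (finprod_mem_ne_zero (fun q => Yv_ne_zero _))
    rw [heq]
    exact hinf
end
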